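/- arXiv:gr-qc/9901063 — 2 statements merged into one kernel-verified Lean document; each statement's English description precedes it below -/
import Mathlib

section
/- In the neighbourhood Morse geometry of type (λ, n−λ) with 1 ≤ λ ≤ n−1, the chronological future of any point on the future light cone of the Morse point is contained in the future region: if q ∈ ∂F = {(x,y) ∈ N : |y| = m₂|x|}, then I⁺(q) ⊆ F = {(x,y) ∈ N : |y| > m₂|x|}. -/
noncomputable section

open Set

/-- Points of `ℝⁿ = ℝ^λ × ℝ^{n−λ}`. -/
abbrev Pt (n lam : ℕ) := EuclideanSpace ℝ (Fin lam) × EuclideanSpace ℝ (Fin (n - lam))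

/-- The Euclidean inner product on `ℝⁿ = ℝ^λ × ℝ^{n−λ}`. -/
def iprod {n lam : ℕ} (v w : Pt n lam) : ℝ :=
  (inner ℝ v.1 w.1 : ℝ) + (inner ℝ v.2 w.2 : ℝ)

/-- The punctured ball `N = {p : 0 < |p| < ε}` (Euclidean norm). -/
def NN (n lam : ℕ) (ε : ℝ) : Set (Pt n lam) :=
  {p | 0 < ‖p.1‖ ^ 2 + ‖p.2‖ ^ 2 ∧ ‖p.1‖ ^ 2 + ‖p.2‖ ^ 2 < ε ^ 2}

/-- The Euclidean gradient of the Morse function `f(x,y) = −|x|² + |y|²`. -/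
def gradf {n lam : ℕ} (p : Pt n lam) : Pt n lam :=
  ((-2 : ℝ) • p.1, (2 : ℝ) • p.2)

/-- The Morse metric with flat auxiliary metric (as a quadratic form):
`g_p(w,w) = |∇f(p)|²⟨w,w⟩ − ζ⟨∇f(p),w⟩²`. -/
def gN (ζ : ℝ) {n lam : ℕ} (p w : Pt n lam) : ℝ :=
  iprod (gradf p) (gradf p) * iprod w w - ζ * iprod (gradf p) w ^ 2

def m1 (ζ : ℝ) : ℝ := (Real.sqrt ζ - 1) / Real.sqrt (ζ - 1)
def m2 (ζ : ℝ) : ℝ := (Real.sqrt ζ + 1) / Real.sqrt (ζ - 1)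

/-- A future-directed timelike curve: a C¹ curve in `N` with everywhere timelike,
future-pointing (`⟨∇f(γ), γ'⟩ > 0`) tangent. -/
def Timelike (ζ ε : ℝ) {n lam : ℕ} (γ γ' : ℝ → Pt n lam) : Prop :=
  (∀ t ∈ Icc (0 : ℝ) 1, HasDerivAt γ (γ' t) t) ∧
  ContinuousOn γ' (Icc (0 : ℝ) 1) ∧
  (∀ t ∈ Icc (0 : ℝ) 1, γ t ∈ NN n lam ε) ∧
  (∀ t ∈ Icc (0 : ℝ) 1, gN ζ (γ t) (γ' t) < 0) ∧
  (∀ t ∈ Icc (0 : ℝ) 1, 0 < iprod (gradf (γ t)) (γ' t))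

/-- The chronology relation `q ≪ p`. -/
def chron (ζ ε : ℝ) {n lam : ℕ} (q p : Pt n lam) : Prop :=
  ∃ γ γ', Timelike ζ ε γ γ' ∧ γ 0 = q ∧ γ 1 = p

def Iplus (ζ ε : ℝ) {n lam : ℕ} (q : Pt n lam) : Set (Pt n lam) :=
  {p ∈ NN n lam ε | chron ζ ε q p}

def Iminus (ζ ε : ℝ) {n lam : ℕ} (q : Pt n lam) : Set (Pt n lam) :=
  {p ∈ NN n lam ε | chron ζ ε p q}

/-- The common past `↓U` (interior in the open set `N` of the set of points
chronologically preceding every point of `U`). -/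
def downSet (ζ ε : ℝ) {n lam : ℕ} (U : Set (Pt n lam)) : Set (Pt n lam) :=
  interior {p ∈ NN n lam ε | ∀ u ∈ U, chron ζ ε p u}

/-- The common future `↑U`. -/
def upSet (ζ ε : ℝ) {n lam : ℕ} (U : Set (Pt n lam)) : Set (Pt n lam) :=
  interior {p ∈ NN n lam ε | ∀ u ∈ U, chron ζ ε u p}

lemma key12 (ζ a b X Y α β : ℝ) (hζ : 1 < ζ) (ha : 0 ≤ a) (hb : 0 ≤ b)
    (hX : 0 ≤ X) (hY : 0 ≤ Y)
    (hCSx : α ^ 2 ≤ a * X) (hCSy : β ^ 2 ≤ b * Y)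
    (hfut : α < β) (htl : (a + b) * (X + Y) < ζ * (β - α) ^ 2) :
    (m2 ζ) ^ 2 * α < β := by
  set c := Real.sqrt ζ with hcdef
  have hc0 : 0 ≤ c := Real.sqrt_nonneg ζ
  have hc2 : c ^ 2 = ζ := Real.sq_sqrt (by linarith)
  have hc1 : 1 < c := by nlinarith
  have hprod : α ^ 2 * β ^ 2 ≤ (a * X) * (b * Y) :=
    mul_le_mul hCSx hCSy (sq_nonneg β) (le_trans (sq_nonneg α) hCSx)
  have haY : 0 ≤ a * Y := mul_nonneg ha hY
  have hbX : 0 ≤ b * X := mul_nonneg hb hX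
  have h1 : (|α| + |β|) ^ 2 ≤ (a + b) * (X + Y) := by
    have h2 : 2 * |α| * |β| ≤ a * Y + b * X := by
      nlinarith [sq_nonneg (a * Y - b * X), sq_abs α, sq_abs β, abs_nonneg α, abs_nonneg β,
        mul_nonneg (abs_nonneg α) (abs_nonneg β)]
    nlinarith [sq_abs α, sq_abs β]
  have h3 : |α| + |β| < c * (β - α) := by
    nlinarith [abs_nonneg α, abs_nonneg β, mul_pos (lt_trans one_pos hc1) (sub_pos.2 hfut)]
  have h4 : (c + 1) * α < (c - 1) * β := by
    nlinarith [le_abs_self α, le_abs_self β]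
  have hm : (m2 ζ) ^ 2 = (c + 1) ^ 2 / (ζ - 1) := by
    rw [m2, div_pow, Real.sq_sqrt (by linarith : (0:ℝ) ≤ ζ - 1)]
  rw [hm, div_mul_eq_mul_div, div_lt_iff₀ (by linarith : (0:ℝ) < ζ - 1)]
  nlinarith [mul_lt_mul_of_pos_right h4 (show (0:ℝ) < c + 1 by linarith), hc2]


/-- for `1 ≤ λ ≤ n−1`, the chronological future of any point on the
future light cone `∂F = {|y| = m₂|x|}` of the Morse point is contained in the
future region `F = {|y| > m₂|x|}`. -/
theorem stmt12 (n lam : ℕ) (hn : 2 ≤ n) (hlam1 : 1 ≤ lam) (hlam2 : lam ≤ n - 1)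
    (ζ ε : ℝ) (hζ : 1 < ζ) (hε : 0 < ε)
    (q : Pt n lam) (hq : q ∈ NN n lam ε) (hqdF : ‖q.2‖ = m2 ζ * ‖q.1‖) :
    Iplus ζ ε q ⊆ {p ∈ NN n lam ε | m2 ζ * ‖p.1‖ < ‖p.2‖} := by
  rintro p ⟨hpN, γ, γ', ⟨hder, hcont', hNN, htl, hfut⟩, h0, h1⟩
  refine ⟨hpN, ?_⟩
  set m := m2 ζ with hm
  set φ : ℝ → ℝ := fun t =>
    (inner ℝ (γ t).2 (γ t).2 : ℝ) - m ^ 2 * (inner ℝ (γ t).1 (γ t).1 : ℝ) with hφ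
  have hφder : ∀ t ∈ Icc (0:ℝ) 1, HasDerivAt φ
      (2 * (inner ℝ (γ t).2 (γ' t).2 : ℝ) - m ^ 2 * (2 * (inner ℝ (γ t).1 (γ' t).1 : ℝ))) t := by
    intro t ht
    have h := hder t ht
    have h1' : HasDerivAt (fun s => (inner ℝ (γ s).1 (γ s).1 : ℝ))
        ((inner ℝ (γ t).1 (γ' t).1 : ℝ) + (inner ℝ (γ' t).1 (γ t).1 : ℝ)) t :=
      HasDerivAt.inner ℝ h.fst h.fst
    have h2' : HasDerivAt (fun s => (inner ℝ (γ s).2 (γ s).2 : ℝ))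
        ((inner ℝ (γ t).2 (γ' t).2 : ℝ) + (inner ℝ (γ' t).2 (γ t).2 : ℝ)) t :=
      HasDerivAt.inner ℝ h.snd h.snd
    have := h2'.sub (h1'.const_mul (m ^ 2))
    refine this.congr_deriv ?_
    rw [real_inner_comm (γ' t).1 (γ t).1, real_inner_comm (γ' t).2 (γ t).2]
    ring
  have hφpos : ∀ t ∈ Icc (0:ℝ) 1,
      0 < 2 * (inner ℝ (γ t).2 (γ' t).2 : ℝ) - m ^ 2 * (2 * (inner ℝ (γ t).1 (γ' t).1 : ℝ)) := by
    intro t ht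
    have htl' := htl t ht
    have hfut' := hfut t ht
    set x := (γ t).1; set y := (γ t).2; set x' := (γ' t).1; set y' := (γ' t).2
    set a := (inner ℝ x x : ℝ); set b := (inner ℝ y y : ℝ)
    set X := (inner ℝ x' x' : ℝ); set Y := (inner ℝ y' y' : ℝ)
    set α := (inner ℝ x x' : ℝ); set β := (inner ℝ y y' : ℝ)
    have ea : gN ζ (γ t) (γ' t) =
        (4 * a + 4 * b) * (X + Y) - ζ * (-2 * α + 2 * β) ^ 2 := by
      simp only [gN, iprod, gradf, real_inner_smul_left, real_inner_smul_right]
      ring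
    have eb : iprod (gradf (γ t)) (γ' t) = -2 * α + 2 * β := by
      simp only [iprod, gradf, real_inner_smul_left]
      rfl
    rw [ea] at htl'
    rw [eb] at hfut'
    have hkey := key12 ζ a b X Y α β hζ real_inner_self_nonneg real_inner_self_nonneg
      real_inner_self_nonneg real_inner_self_nonneg
      (by have := real_inner_mul_inner_self_le x x'; nlinarith)
      (by have := real_inner_mul_inner_self_le y y'; nlinarith)
      (by linarith) (by nlinarith)
    rw [← hm] at hkey
    linarith
  have hmono : StrictMonoOn φ (Icc (0:ℝ) 1) := by
    apply strictMonoOn_of_deriv_pos (convex_Icc 0 1)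
    · intro t ht
      exact (hφder t ht).continuousAt.continuousWithinAt
    · intro t ht
      rw [interior_Icc] at ht
      have ht' : t ∈ Icc (0:ℝ) 1 := ⟨le_of_lt ht.1, le_of_lt ht.2⟩
      rw [(hφder t ht').deriv]
      exact hφpos t ht'
  have h01 : φ 0 < φ 1 :=
    hmono (by constructor <;> norm_num) (by constructor <;> norm_num) one_pos
  have hφ0 : φ 0 = 0 := by
    simp only [hφ, h0, real_inner_self_eq_norm_sq, hqdF]
    ring
  have hφ1 : φ 1 = ‖p.2‖ ^ 2 - m ^ 2 * ‖p.1‖ ^ 2 := by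
    simp only [hφ, h1, real_inner_self_eq_norm_sq]
  have hmpos : 0 ≤ m := by
    rw [hm, m2]
    positivity
  have hlt : (m * ‖p.1‖) ^ 2 < ‖p.2‖ ^ 2 := by
    rw [mul_pow]
    linarith [hφ0 ▸ hφ1 ▸ h01]
  exact lt_of_pow_lt_pow_left₀ 2 (norm_nonneg p.2) hlt
end
end

section
/- In the neighbourhood Morse geometry of type (λ, n−λ), for any index 0 ≤ λ ≤ n and any point q ∈ N: if there exists y ∈ ↓I⁺(q) with y ∉ I⁻(q), then there exists z ∈ ↓I⁺(q) with z not in the closure (taken in N) of I⁻(q). Dually, if there exists y ∈ ↑I⁻(q) with y ∉ I⁺(q), then there exists z ∈ ↑I⁻(q) with z not in the closure in N of I⁺(q). -/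
set_option maxHeartbeats 1000000


noncomputable section

open Set

namespace Aux18

variable {n lam : ℕ}

abbrev T (n lam : ℕ) := WithLp 2 (EuclideanSpace ℝ (Fin lam) × EuclideanSpace ℝ (Fin (n - lam)))

def J : Pt n lam ≃L[ℝ] T n lam := (WithLp.prodContinuousLinearEquiv 2 ℝ _ _).symm

lemma iprod_eq (v w : Pt n lam) : iprod v w = (inner ℝ (J v) (J w) : ℝ) := by
  rw [WithLp.prod_inner_apply]; rfl

def nrm (v : Pt n lam) : ℝ := ‖J v‖

lemma nrm_nonneg (v : Pt n lam) : 0 ≤ nrm v := norm_nonneg _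

lemma iprod_self_eq (v : Pt n lam) : iprod v v = nrm v ^ 2 := by
  rw [iprod_eq, real_inner_self_eq_norm_sq]; rfl

lemma nrm_add_le (v w : Pt n lam) : nrm (v + w) ≤ nrm v + nrm w := by
  unfold nrm; rw [map_add]; exact norm_add_le _ _

lemma nrm_smul (c : ℝ) (hc : 0 ≤ c) (v : Pt n lam) : nrm (c • v) = c * nrm v := by
  unfold nrm; rw [map_smul, norm_smul, Real.norm_eq_abs, abs_of_nonneg hc]

lemma iprod_add_right (u v w : Pt n lam) : iprod u (v + w) = iprod u v + iprod u w := by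
  simp only [iprod_eq, map_add, inner_add_right]

lemma iprod_smul_right (c : ℝ) (u v : Pt n lam) : iprod u (c • v) = c * iprod u v := by
  simp only [iprod_eq, map_smul, real_inner_smul_right]

lemma iprod_smul_left (c : ℝ) (u v : Pt n lam) : iprod (c • u) v = c * iprod u v := by
  simp only [iprod_eq, map_smul, real_inner_smul_left]

lemma continuous_iprod : Continuous fun x : Pt n lam × Pt n lam => iprod x.1 x.2 := by
  simp only [iprod_eq]
  exact continuous_inner.comp ((J.continuous.comp continuous_fst).prodMk
    (J.continuous.comp continuous_snd))

lemma continuous_gradf : Continuous (gradf : Pt n lam → Pt n lam) := by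
  unfold gradf
  fun_prop

lemma continuous_gN (ζ : ℝ) :
    Continuous fun x : Pt n lam × Pt n lam => gN ζ x.1 x.2 := by
  unfold gN
  have h1 : Continuous fun x : Pt n lam × Pt n lam => iprod (gradf x.1) (gradf x.1) :=
    continuous_iprod.comp (((continuous_gradf).comp continuous_fst).prodMk
      ((continuous_gradf).comp continuous_fst))
  have h2 : Continuous fun x : Pt n lam × Pt n lam => iprod x.2 x.2 :=
    continuous_iprod.comp (continuous_snd.prodMk continuous_snd)
  have h3 : Continuous fun x : Pt n lam × Pt n lam => iprod (gradf x.1) x.2 :=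
    continuous_iprod.comp (((continuous_gradf).comp continuous_fst).prodMk continuous_snd)
  exact ((h1.mul h2).sub ((continuous_const.mul (h3.pow 2))))

lemma isOpen_NN (ε : ℝ) : IsOpen (NN n lam ε) := by
  have hc : Continuous fun p : Pt n lam => ‖p.1‖ ^ 2 + ‖p.2‖ ^ 2 :=
    ((continuous_fst.norm.pow 2).add (continuous_snd.norm.pow 2))
  have : NN n lam ε = (fun p : Pt n lam => ‖p.1‖ ^ 2 + ‖p.2‖ ^ 2) ⁻¹' (Ioo 0 (ε ^ 2)) := rfl
  rw [this]
  exact isOpen_Ioo.preimage hc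

/-- The "good" set of (point, velocity) pairs. -/
def Good (ζ ε : ℝ) (n lam : ℕ) : Set (Pt n lam × Pt n lam) :=
  {x | x.1 ∈ NN n lam ε ∧ gN ζ x.1 x.2 < 0 ∧ 0 < iprod (gradf x.1) x.2}

lemma isOpen_Good (ζ ε : ℝ) : IsOpen (Good ζ ε n lam) := by
  have h1 : IsOpen {x : Pt n lam × Pt n lam | x.1 ∈ NN n lam ε} :=
    (isOpen_NN ε).preimage continuous_fst
  have h2 : IsOpen {x : Pt n lam × Pt n lam | gN ζ x.1 x.2 < 0} :=
    isOpen_lt (continuous_gN ζ) continuous_const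
  have h3 : IsOpen {x : Pt n lam × Pt n lam | 0 < iprod (gradf x.1) x.2} :=
    isOpen_lt continuous_const (continuous_iprod.comp
      ((continuous_gradf.comp continuous_fst).prodMk continuous_snd))
  have : Good ζ ε n lam = ({x : Pt n lam × Pt n lam | x.1 ∈ NN n lam ε} ∩ {x | gN ζ x.1 x.2 < 0}) ∩ {x | 0 < iprod (gradf x.1) x.2} := by ext x; simp [Good, and_assoc]
  rw [this]; exact (h1.inter h2).inter h3

lemma gN_smul (ζ c : ℝ) (p v : Pt n lam) : gN ζ p (c • v) = c ^ 2 * gN ζ p v := by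
  unfold gN
  rw [iprod_smul_right, iprod_smul_left, iprod_smul_right]
  ring

lemma good_smul {ζ ε c : ℝ} (hc : 0 < c) {p v : Pt n lam}
    (h : (p, v) ∈ Good ζ ε n lam) : (p, c • v) ∈ Good ζ ε n lam := by
  obtain ⟨h1, h2, h3⟩ := h
  refine ⟨h1, ?_, ?_⟩
  · rw [gN_smul]
    exact mul_neg_of_pos_of_neg (by positivity) h2
  · rw [iprod_smul_right]
    exact mul_pos hc h3

/-- key quantitative timelike inequality -/
lemma nrm_mul_lt {ζ : ℝ} (hζ : 1 < ζ) {p v : Pt n lam}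
    (h2 : gN ζ p v < 0) (h3 : 0 < iprod (gradf p) v) :
    nrm (gradf p) * nrm v < Real.sqrt ζ * iprod (gradf p) v := by
  have hz0 : (0:ℝ) < ζ := lt_trans one_pos hζ
  have hs : Real.sqrt ζ ^ 2 = ζ := Real.sq_sqrt hz0.le
  have hsq : (nrm (gradf p) * nrm v) ^ 2 < (Real.sqrt ζ * iprod (gradf p) v) ^ 2 := by
    have := h2
    unfold gN at this
    rw [iprod_self_eq, iprod_self_eq] at this
    nlinarith [this]
  have h1 : 0 ≤ nrm (gradf p) * nrm v := mul_nonneg (nrm_nonneg _) (nrm_nonneg _)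
  have h4 : 0 < Real.sqrt ζ * iprod (gradf p) v :=
    mul_pos (Real.sqrt_pos.2 hz0) h3
  nlinarith [hsq, h1, h4]

lemma good_of_nrm_lt {ζ ε : ℝ} (hζ : 1 < ζ) {p v : Pt n lam} (hp : p ∈ NN n lam ε)
    (h3 : 0 < iprod (gradf p) v)
    (hlt : nrm (gradf p) * nrm v < Real.sqrt ζ * iprod (gradf p) v) :
    (p, v) ∈ Good ζ ε n lam := by
  have hz0 : (0:ℝ) < ζ := lt_trans one_pos hζ
  have hs : Real.sqrt ζ ^ 2 = ζ := Real.sq_sqrt hz0.le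
  refine ⟨hp, ?_, h3⟩
  unfold gN
  rw [iprod_self_eq, iprod_self_eq]
  have h1 : 0 ≤ nrm (gradf p) * nrm v := mul_nonneg (nrm_nonneg _) (nrm_nonneg _)
  nlinarith [hlt, h1]

/-- convexity of the cone -/
lemma good_add {ζ ε : ℝ} (hζ : 1 < ζ) {p v w : Pt n lam} {c d : ℝ}
    (hc : 0 ≤ c) (hd : 0 ≤ d) (hcd : 0 < c + d)
    (hv : (p, v) ∈ Good ζ ε n lam) (hw : (p, w) ∈ Good ζ ε n lam) :
    (p, c • v + d • w) ∈ Good ζ ε n lam := by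
  obtain ⟨hp, hv2, hv3⟩ := hv
  obtain ⟨-, hw2, hw3⟩ := hw
  have hlv := nrm_mul_lt hζ hv2 hv3
  have hlw := nrm_mul_lt hζ hw2 hw3
  set u := gradf p with hu
  set s := Real.sqrt ζ with hsdef
  have hip : iprod u (c • v + d • w)
      = c * iprod u v + d * iprod u w := by
    rw [iprod_add_right, iprod_smul_right, iprod_smul_right]
  have hkey : c * (nrm u * nrm v) + d * (nrm u * nrm w)
      < s * (c * iprod u v + d * iprod u w) := by
    rcases eq_or_lt_of_le hc with hc0 | hcpos
    · have hdpos : 0 < d := by linarith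
      nlinarith [hlw, hlv]
    · rcases eq_or_lt_of_le hd with hd0 | hdpos
      · nlinarith [hlv, hlw]
      · nlinarith [hlv, hlw]
  have h3 : 0 < iprod u (c • v + d • w) := by
    rw [hip]
    have hs0 : 0 < s := Real.sqrt_pos.2 (by linarith)
    nlinarith [mul_nonneg hc (mul_nonneg (nrm_nonneg u) (nrm_nonneg v)),
      mul_nonneg hd (mul_nonneg (nrm_nonneg u) (nrm_nonneg w)), hkey]
  have htri : nrm (c • v + d • w) ≤ c * nrm v + d * nrm w := by
    calc nrm (c • v + d • w) ≤ nrm (c • v) + nrm (d • w) := nrm_add_le _ _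
    _ = c * nrm v + d * nrm w := by rw [nrm_smul c hc, nrm_smul d hd]
  have hmul : nrm u * nrm (c • v + d • w) ≤ c * (nrm u * nrm v) + d * (nrm u * nrm w) := by
    have := mul_le_mul_of_nonneg_left htri (nrm_nonneg u)
    linarith [this]
  refine good_of_nrm_lt hζ hp h3 ?_
  rw [hip]
  exact lt_of_le_of_lt hmul hkey

/-- positive-part square -/
def sqp (s : ℝ) : ℝ := (max s 0) ^ 2

lemma sqp_of_nonpos {s : ℝ} (h : s ≤ 0) : sqp s = 0 := by
  unfold sqp; rw [max_eq_right h]; ring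

lemma sqp_of_nonneg {s : ℝ} (h : 0 ≤ s) : sqp s = s ^ 2 := by
  unfold sqp; rw [max_eq_left h]

lemma sqp_hasDerivAt (s : ℝ) : HasDerivAt sqp (2 * max s 0) s := by
  rcases lt_trichotomy s 0 with h | h | h
  · have : ∀ᶠ x in nhds s, sqp x = (0:ℝ) := by
      filter_upwards [eventually_lt_nhds h] with x hx
      exact sqp_of_nonpos hx.le
    rw [max_eq_right h.le, mul_zero]
    exact (hasDerivAt_const s (0:ℝ)).congr_of_eventuallyEq this
  · subst h
    rw [max_self, mul_zero]
    rw [hasDerivAt_iff_isLittleO]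
    rw [Asymptotics.isLittleO_iff]
    intro c hc
    rw [Metric.eventually_nhds_iff]
    refine ⟨c, hc, fun {x} hx => ?_⟩
    simp only [sqp, smul_zero, sub_zero, Real.norm_eq_abs]
    have h1 : |max x 0| ≤ |x| := by
      rcases le_or_gt x 0 with h' | h'
      · rw [max_eq_right h']; simp
      · rw [max_eq_left h'.le]
    have hd : |x| < c := by
      have : dist x 0 = |x| := by simp [Real.dist_eq]
      linarith [hx, this.symm.le]
    have h2 : |(max x 0) ^ 2 - (max (0:ℝ) 0) ^ 2| = |max x 0| * |max x 0| := by
      simp [sq, abs_mul]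
    rw [h2]
    calc |max x 0| * |max x 0| ≤ |x| * |x| :=
          mul_le_mul h1 h1 (abs_nonneg _) (abs_nonneg _)
    _ ≤ c * |x| := mul_le_mul_of_nonneg_right hd.le (abs_nonneg _)
  · have : ∀ᶠ x in nhds s, (fun y : ℝ => y ^ 2) x = sqp x := by
      filter_upwards [eventually_gt_nhds h] with x hx
      rw [sqp_of_nonneg hx.le]
    rw [max_eq_left h.le]
    have h2 : HasDerivAt (fun y : ℝ => y ^ 2) (2 * s) s := by
      simpa using (hasDerivAt_pow 2 s)
    exact h2.congr_of_eventuallyEq (by filter_upwards [this] with x hx using hx.symm)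

variable (m τ : ℝ)

/-- transition function -/
def tf (t : ℝ) : ℝ := m * t - (m / (2 * τ)) * (sqp (t - 1/2) - sqp (t - 1/2 - τ))

/-- its derivative -/
def tf' (t : ℝ) : ℝ := m - (m / τ) * (max (t - 1/2) 0 - max (t - 1/2 - τ) 0)

lemma tf_hasDerivAt (hτ : 0 < τ) (t : ℝ) : HasDerivAt (tf m τ) (tf' m τ t) t := by
  have h1 : HasDerivAt (fun t : ℝ => sqp (t - 1/2)) (2 * max (t - 1/2) 0) t := by
    simpa [Function.comp_def] using (sqp_hasDerivAt (t - 1/2)).comp t ((hasDerivAt_id t).sub_const (1/2))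
  have h2 : HasDerivAt (fun t : ℝ => sqp (t - 1/2 - τ)) (2 * max (t - 1/2 - τ) 0) t := by
    simpa [Function.comp_def] using (sqp_hasDerivAt (t - 1/2 - τ)).comp t
      (((hasDerivAt_id t).sub_const (1/2)).sub_const τ)
  have h3 : HasDerivAt (fun t : ℝ => m * t) m t := by
    simpa using (hasDerivAt_id t).const_mul m
  have h := h3.sub (((h1.sub h2)).const_mul (m / (2 * τ)))
  refine h.congr_deriv ?_
  unfold tf'
  field_simp
lemma continuous_tf' : Continuous (tf' m τ) := by
  unfold tf'
  continuity

lemma max_sub_max_bounds {a τ : ℝ} (hτ : 0 ≤ τ) :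
    0 ≤ max a 0 - max (a - τ) 0 ∧ max a 0 - max (a - τ) 0 ≤ τ := by
  constructor
  · have : max (a - τ) 0 ≤ max a 0 := max_le_max (by linarith) le_rfl
    linarith
  · have h1 : a ≤ τ + max (a - τ) 0 := by
      have := le_max_left (a - τ) 0; linarith
    have h2 : (0:ℝ) ≤ τ + max (a - τ) 0 := by
      have := le_max_right (a - τ) 0; linarith
    have := max_le h1 h2
    linarith

lemma tf'_eq_m {t : ℝ} (hτ : 0 ≤ τ) (ht : t ≤ 1/2) : tf' m τ t = m := by
  unfold tf'
  rw [max_eq_right (by linarith : t - 1/2 ≤ 0), max_eq_right (by linarith : t - 1/2 - τ ≤ 0)]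
  ring

lemma tf'_eq_zero {t : ℝ} (hτ : 0 < τ) (ht : 1/2 + τ ≤ t) : tf' m τ t = 0 := by
  unfold tf'
  rw [max_eq_left (by linarith : (0:ℝ) ≤ t - 1/2), max_eq_left (by linarith : (0:ℝ) ≤ t - 1/2 - τ)]
  field_simp
  ring

lemma tf'_nonneg (hτ : 0 < τ) (hm : 0 ≤ m) (t : ℝ) : 0 ≤ tf' m τ t := by
  obtain ⟨h1, h2⟩ := max_sub_max_bounds (a := t - 1/2) hτ.le
  unfold tf'
  have h3 : (m / τ) * (max (t - 1/2) 0 - max (t - 1/2 - τ) 0) ≤ (m / τ) * τ :=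
    mul_le_mul_of_nonneg_left h2 (by positivity)
  have h4 : (m / τ) * τ = m := by field_simp
  linarith

lemma tf'_le (hτ : 0 < τ) (hm : 0 ≤ m) (t : ℝ) : tf' m τ t ≤ m := by
  obtain ⟨h1, h2⟩ := max_sub_max_bounds (a := t - 1/2) hτ.le
  unfold tf'
  have h3 : 0 ≤ (m / τ) * (max (t - 1/2) 0 - max (t - 1/2 - τ) 0) :=
    mul_nonneg (by positivity) h1
  linarith

lemma tf_linear {t : ℝ} (hτ : 0 ≤ τ) (ht : t ≤ 1/2) : tf m τ t = m * t := by
  unfold tf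
  rw [sqp_of_nonpos (by linarith), sqp_of_nonpos (by linarith)]
  ring

lemma tf_zero (hτ : 0 ≤ τ) : tf m τ 0 = 0 := by
  rw [tf_linear m τ hτ (by norm_num)]; ring

lemma tf_eq_one {t : ℝ} (hτ : 0 < τ) (hmτ : m * (1 + τ) = 2) (ht : 1/2 + τ ≤ t) :
    tf m τ t = 1 := by
  unfold tf
  rw [sqp_of_nonneg (by linarith), sqp_of_nonneg (by linarith)]
  have hτ0 : τ ≠ 0 := hτ.ne'
  field_simp
  nlinarith [hmτ]

lemma tf_mono (hτ : 0 < τ) (hm : 0 ≤ m) : Monotone (tf m τ) := by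
  have hdiff : ∀ t, HasDerivAt (tf m τ) (tf' m τ t) t := tf_hasDerivAt m τ hτ
  apply monotone_of_deriv_nonneg
  · exact fun t => (hdiff t).differentiableAt
  · intro t
    rw [(hdiff t).deriv]
    exact tf'_nonneg m τ hτ hm t

lemma tf_mem (hτ : 0 < τ) (hτ2 : τ ≤ 1/2) (hm : 0 ≤ m) (hmτ : m * (1 + τ) = 2)
    {t : ℝ} (ht : t ∈ Icc (0:ℝ) 1) : tf m τ t ∈ Icc (0:ℝ) 1 := by
  constructor
  · have := tf_mono m τ hτ hm ht.1
    rwa [tf_zero m τ hτ.le] at this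
  · have := tf_mono m τ hτ hm ht.2
    rwa [tf_eq_one m τ (t := 1) hτ hmτ (by linarith)] at this



variable {n lam : ℕ}

lemma mem_good {ζ ε : ℝ} {γ γ' : ℝ → Pt n lam} (h : Timelike ζ ε γ γ')
    {t : ℝ} (ht : t ∈ Icc (0:ℝ) 1) : (γ t, γ' t) ∈ Good ζ ε n lam :=
  ⟨h.2.2.1 t ht, h.2.2.2.1 t ht, h.2.2.2.2 t ht⟩

lemma timelike_perturb {ζ ε : ℝ} {γ γ' : ℝ → Pt n lam} (h : Timelike ζ ε γ γ') (a b : ℝ) :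
    ∃ η > 0, ∀ d : Pt n lam, ‖d‖ < η →
      Timelike ζ ε (fun t => γ t + (a + b * t) • d) (fun t => γ' t + b • d) := by
  obtain ⟨hder, hcont, hN, hg, hpos⟩ := h
  set Φ : Pt n lam × ℝ → Pt n lam × Pt n lam :=
    fun x => (γ x.2 + (a + b * x.2) • x.1, γ' x.2 + b • x.1) with hΦdef
  set SS : Set (Pt n lam × ℝ) := (univ : Set (Pt n lam)) ×ˢ Icc (0:ℝ) 1 with hSSdef
  have hγcont : ContinuousOn γ (Icc (0:ℝ) 1) :=
    fun t ht => ((hder t ht).continuousAt).continuousWithinAt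
  have hmaps : MapsTo (fun x : Pt n lam × ℝ => x.2) SS (Icc (0:ℝ) 1) := by
    intro x hx; exact hx.2
  have hΦcont : ContinuousOn Φ SS := by
    apply ContinuousOn.prodMk
    · exact (hγcont.comp continuous_snd.continuousOn hmaps).add
        ((continuous_const.add (continuous_const.mul continuous_snd)).smul
          continuous_fst).continuousOn
    · exact (hcont.comp continuous_snd.continuousOn hmaps).add
        (by fun_prop : Continuous fun x : Pt n lam × ℝ => b • x.1).continuousOn
  obtain ⟨O, hOopen, hOeq⟩ := (continuousOn_iff'.1 hΦcont) (Good ζ ε n lam) (isOpen_Good ζ ε)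
  have hsub : ({(0 : Pt n lam)} : Set (Pt n lam)) ×ˢ Icc (0:ℝ) 1 ⊆ O := by
    intro x hx
    obtain ⟨hx1, hx2⟩ := hx
    have hx1' : x.1 = 0 := hx1
    have hmem : x ∈ Φ ⁻¹' (Good ζ ε n lam) ∩ SS := by
      constructor
      · have hΦx : Φ x = (γ x.2, γ' x.2) := by
          rw [hΦdef]; simp [hx1']
        show Φ x ∈ Good ζ ε n lam
        rw [hΦx]
        exact mem_good ⟨hder, hcont, hN, hg, hpos⟩ hx2
      · exact ⟨trivial, hx2⟩
    rw [hOeq] at hmem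
    exact hmem.1
  obtain ⟨u, v, huo, hvo, hu, hv, huv⟩ :=
    generalized_tube_lemma isCompact_singleton isCompact_Icc hOopen hsub
  obtain ⟨η, hη, hball⟩ := Metric.isOpen_iff.1 huo 0 (hu rfl)
  refine ⟨η, hη, fun d hd => ?_⟩
  have hgood : ∀ t ∈ Icc (0:ℝ) 1,
      (γ t + (a + b * t) • d, γ' t + b • d) ∈ Good ζ ε n lam := by
    intro t ht
    have h1 : ((d, t) : Pt n lam × ℝ) ∈ u ×ˢ v := by
      refine ⟨hball ?_, hv ht⟩
      simpa [dist_eq_norm] using hd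
    have h2 : ((d, t) : Pt n lam × ℝ) ∈ O ∩ SS := ⟨huv h1, trivial, ht⟩
    rw [← hOeq] at h2
    exact h2.1
  refine ⟨?_, ?_, ?_, ?_, ?_⟩
  · intro t ht
    have h1 : HasDerivAt (fun t : ℝ => (a + b * t) • d) (b • d) t := by
      have : HasDerivAt (fun t : ℝ => a + b * t) b t := by
        exact ((hasDerivAt_const t a).add ((hasDerivAt_id t).const_mul b)).congr_deriv (by ring)
      simpa using this.smul_const d
    exact (hder t ht).add h1
  · exact hcont.add continuous_const.continuousOn
  · exact fun t ht => (hgood t ht).1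
  · exact fun t ht => (hgood t ht).2.1
  · exact fun t ht => (hgood t ht).2.2


lemma iprod_gradf_self (p : Pt n lam) :
    iprod (gradf p) (gradf p) = 4 * (‖p.1‖ ^ 2 + ‖p.2‖ ^ 2) := by
  unfold iprod gradf
  rw [real_inner_smul_left, real_inner_smul_left, real_inner_smul_right, real_inner_smul_right,
    real_inner_self_eq_norm_sq, real_inner_self_eq_norm_sq]
  ring

lemma good_self {ζ ε : ℝ} (hζ : 1 < ζ) {p : Pt n lam} (hp : p ∈ NN n lam ε) :
    (p, gradf p) ∈ Good ζ ε n lam := by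
  have hQ : 0 < iprod (gradf p) (gradf p) := by
    rw [iprod_gradf_self]; have := hp.1; linarith
  have hgN : gN ζ p (gradf p) < 0 := by
    unfold gN
    nlinarith [hQ, mul_pos hQ hQ]
  exact ⟨hp, hgN, hQ⟩

lemma ball_chron {ζ ε : ℝ} (hζ : 1 < ζ) {p : Pt n lam} (hp : p ∈ NN n lam ε)
    {V : Set (Pt n lam)} (hV : IsOpen V) (hpV : p ∈ V) :
    (∃ z ∈ V, ∃ η > 0, ∀ w, dist w z < η → chron ζ ε p w) ∧
    (∃ z ∈ V, ∃ η > 0, ∀ w, dist w z < η → chron ζ ε w p) := by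
  set u := gradf p with hu
  have hWopen : IsOpen (Good ζ ε n lam ∩ (V ×ˢ (univ : Set (Pt n lam)))) :=
    (isOpen_Good ζ ε).inter (hV.prod isOpen_univ)
  have hWmem : (p, u) ∈ Good ζ ε n lam ∩ (V ×ˢ univ) :=
    ⟨good_self hζ hp, hpV, trivial⟩
  have hfcont : Continuous fun s : ℝ => ((p + s • u, u) : Pt n lam × Pt n lam) := by
    exact (continuous_const.add (continuous_id.smul continuous_const)).prodMk
      continuous_const
  have h0 : (fun s : ℝ => ((p + s • u, u) : Pt n lam × Pt n lam)) 0
      ∈ Good ζ ε n lam ∩ (V ×ˢ univ) := by simpa using hWmem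
  obtain ⟨δ₀, hδ₀, hδball⟩ := Metric.isOpen_iff.1 (hWopen.preimage hfcont) 0 h0
  set δ := δ₀ / 2 with hδdef
  have hδpos : 0 < δ := by positivity
  have hprop : ∀ s : ℝ, |s| ≤ δ → (p + s • u, u) ∈ Good ζ ε n lam ∧ p + s • u ∈ V := by
    intro s hs
    have : s ∈ Metric.ball (0:ℝ) δ₀ := by
      simp only [Metric.mem_ball, Real.dist_eq, sub_zero]
      linarith [abs_nonneg s]
    have := hδball this
    exact ⟨this.1, this.2.1⟩
  have habsf : ∀ t ∈ Icc (0:ℝ) 1, |t * δ| ≤ δ := by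
    intro t ht
    rw [abs_of_nonneg (mul_nonneg ht.1 hδpos.le)]
    nlinarith [ht.2, hδpos]
  constructor
  · -- future ball
    set γ : ℝ → Pt n lam := fun t => p + (t * δ) • u with hγdef
    set γ' : ℝ → Pt n lam := fun _ => δ • u with hγ'def
    have hTL : Timelike ζ ε γ γ' := by
      refine ⟨?_, ?_, ?_, ?_, ?_⟩
      · intro t ht
        have h1 : HasDerivAt (fun t : ℝ => (t * δ) • u) (δ • u) t := by
          simpa using ((hasDerivAt_id t).mul_const δ).smul_const u
        exact ((hasDerivAt_const t p).add h1).congr_deriv (by simp [hγ'def])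
      · exact continuous_const.continuousOn
      · intro t ht
        exact ((hprop _ (habsf t ht)).1).1
      · intro t ht
        exact (good_smul hδpos ((hprop _ (habsf t ht)).1)).2.1
      · intro t ht
        exact (good_smul hδpos ((hprop _ (habsf t ht)).1)).2.2
    obtain ⟨η, hη, hpert⟩ := timelike_perturb hTL 0 1
    refine ⟨p + δ • u, (hprop δ (le_of_eq (abs_of_nonneg hδpos.le))).2, η, hη, fun w hw => ?_⟩
    set d := w - (p + δ • u) with hd
    refine ⟨_, _, hpert d (by rw [hd, ← dist_eq_norm]; exact hw), ?_, ?_⟩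
    · show γ 0 + ((0:ℝ) + 1 * 0) • d = p
      simp [hγdef]
    · show γ 1 + ((0:ℝ) + 1 * 1) • d = w
      simp [hγdef, hd]
  · -- past ball
    set γ : ℝ → Pt n lam := fun t => p + ((t - 1) * δ) • u with hγdef
    set γ' : ℝ → Pt n lam := fun _ => δ • u with hγ'def
    have habs : ∀ t ∈ Icc (0:ℝ) 1, |(t - 1) * δ| ≤ δ := by
      intro t ht
      rw [abs_of_nonpos (by nlinarith [ht.2, hδpos] : (t - 1) * δ ≤ 0)]
      nlinarith [ht.1, hδpos]
    have hTL : Timelike ζ ε γ γ' := by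
      refine ⟨?_, ?_, ?_, ?_, ?_⟩
      · intro t ht
        have h1 : HasDerivAt (fun t : ℝ => ((t - 1) * δ) • u) (δ • u) t := by
          simpa using (((hasDerivAt_id t).sub_const 1).mul_const δ).smul_const u
        exact ((hasDerivAt_const t p).add h1).congr_deriv (by simp [hγ'def])
      · exact continuous_const.continuousOn
      · intro t ht
        exact ((hprop _ (habs t ht)).1).1
      · intro t ht
        exact (good_smul hδpos ((hprop _ (habs t ht)).1)).2.1
      · intro t ht
        exact (good_smul hδpos ((hprop _ (habs t ht)).1)).2.2
    obtain ⟨η, hη, hpert⟩ := timelike_perturb hTL 1 (-1)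
    have hzV : p + (-δ) • u ∈ V := (hprop (-δ) (le_of_eq (by rw [abs_neg, abs_of_nonneg hδpos.le]))).2
    refine ⟨p + (-δ) • u, hzV, η, hη, fun w hw => ?_⟩
    set d := w - (p + (-δ) • u) with hd
    refine ⟨_, _, hpert d (by rw [hd, ← dist_eq_norm]; exact hw), ?_, ?_⟩
    · show γ 0 + ((1:ℝ) + (-1) * 0) • d = w
      simp only [hγdef, hd]
      have : ((0:ℝ) - 1) * δ = -δ := by ring
      rw [this]
      module
    · show γ 1 + ((1:ℝ) + (-1) * 1) • d = p
      simp [hγdef]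


lemma chron_trans {ζ ε : ℝ} (hζ : 1 < ζ) {x y z : Pt n lam}
    (h1 : chron ζ ε x y) (h2 : chron ζ ε y z) : chron ζ ε x z := by
  obtain ⟨γ₁, γ₁', hT1, hx, hy1⟩ := h1
  obtain ⟨γ₂, γ₂', hT2, hy2, hz⟩ := h2
  obtain ⟨hder1, hcont1, hN1, hg1, hp1⟩ := hT1
  obtain ⟨hder2, hcont2, hN2, hg2, hp2⟩ := hT2
  have hyy : γ₁ 1 = γ₂ 0 := by rw [hy1, hy2]
  -- the compact coefficient set
  set A : Set (ℝ × ℝ) := (Icc (0:ℝ) 2 ×ˢ Icc (0:ℝ) 2) ∩ {c : ℝ × ℝ | 1 ≤ c.1 + c.2}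
    with hAdef
  have hAcomp : IsCompact A :=
    (isCompact_Icc.prod isCompact_Icc).inter_right
      (isClosed_le continuous_const (continuous_fst.add continuous_snd))
  set Ψ : (ℝ × ℝ) × (ℝ × ℝ) → Pt n lam × Pt n lam :=
    fun w => (γ₁ w.2.1 + γ₂ w.2.2 - γ₂ 0, w.1.1 • γ₁' w.2.1 + w.1.2 • γ₂' w.2.2) with hΨdef
  set SS : Set ((ℝ × ℝ) × (ℝ × ℝ)) :=
    (univ : Set (ℝ × ℝ)) ×ˢ (Icc (0:ℝ) 1 ×ˢ Icc (0:ℝ) 1) with hSSdef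
  have hγ₁c : ContinuousOn γ₁ (Icc (0:ℝ) 1) :=
    fun t ht => ((hder1 t ht).continuousAt).continuousWithinAt
  have hγ₂c : ContinuousOn γ₂ (Icc (0:ℝ) 1) :=
    fun t ht => ((hder2 t ht).continuousAt).continuousWithinAt
  have hm1 : MapsTo (fun w : (ℝ × ℝ) × (ℝ × ℝ) => w.2.1) SS (Icc (0:ℝ) 1) :=
    fun w hw => hw.2.1
  have hm2 : MapsTo (fun w : (ℝ × ℝ) × (ℝ × ℝ) => w.2.2) SS (Icc (0:ℝ) 1) :=
    fun w hw => hw.2.2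
  have hΨcont : ContinuousOn Ψ SS := by
    apply ContinuousOn.prodMk
    · exact ((hγ₁c.comp (continuous_fst.comp continuous_snd).continuousOn hm1).add
        (hγ₂c.comp (continuous_snd.comp continuous_snd).continuousOn hm2)).sub
        continuousOn_const
    · exact ((continuous_fst.comp continuous_fst).continuousOn.smul
        (hcont1.comp (continuous_fst.comp continuous_snd).continuousOn hm1)).add
        ((continuous_snd.comp continuous_fst).continuousOn.smul
        (hcont2.comp (continuous_snd.comp continuous_snd).continuousOn hm2))
  obtain ⟨O, hOopen, hOeq⟩ := (continuousOn_iff'.1 hΨcont) (Good ζ ε n lam) (isOpen_Good ζ ε)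
  have hsub : A ×ˢ ({((1:ℝ),(0:ℝ))} : Set (ℝ × ℝ)) ⊆ O := by
    rintro ⟨c, s⟩ ⟨hcA, hs⟩
    have hs' : s = ((1:ℝ),(0:ℝ)) := hs
    have hgood1 : (γ₁ 1, γ₁' 1) ∈ Good ζ ε n lam :=
      mem_good ⟨hder1, hcont1, hN1, hg1, hp1⟩ (by norm_num)
    have hgood2 : (γ₁ 1, γ₂' 0) ∈ Good ζ ε n lam := by
      rw [hyy]
      exact mem_good ⟨hder2, hcont2, hN2, hg2, hp2⟩ (by norm_num)
    have hc1 : c.1 ∈ Icc (0:ℝ) 2 := hcA.1.1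
    have hc2 : c.2 ∈ Icc (0:ℝ) 2 := hcA.1.2
    have hsum : 1 ≤ c.1 + c.2 := hcA.2
    have hcomb : (γ₁ 1, c.1 • γ₁' 1 + c.2 • γ₂' 0) ∈ Good ζ ε n lam :=
      good_add hζ hc1.1 hc2.1 (by linarith) hgood1 hgood2
    have hmem : (c, s) ∈ Ψ ⁻¹' (Good ζ ε n lam) ∩ SS := by
      constructor
      · show Ψ (c, s) ∈ Good ζ ε n lam
        have hΨeq : Ψ (c, s) = (γ₁ 1 + γ₂ 0 - γ₂ 0, c.1 • γ₁' 1 + c.2 • γ₂' 0) := by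
          rw [hΨdef, hs']
        rw [hΨeq, add_sub_cancel_right]
        exact hcomb
      · exact ⟨trivial, by rw [hs']; exact ⟨⟨by norm_num, by norm_num⟩, ⟨le_rfl, by norm_num⟩⟩⟩
    rw [hOeq] at hmem
    exact hmem.1
  obtain ⟨u, v, huo, hvo, hAu, hv, huv⟩ :=
    generalized_tube_lemma hAcomp isCompact_singleton hOopen hsub
  obtain ⟨ρ', hρ'pos, hρball⟩ := Metric.isOpen_iff.1 hvo ((1:ℝ),(0:ℝ)) (hv rfl)
  -- parameters
  obtain ⟨ρ, hρpos, hρle, hρlt⟩ : ∃ ρ : ℝ, 0 < ρ ∧ ρ ≤ 1/2 ∧ 3/2 * ρ < ρ' := by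
    refine ⟨min 1 ρ' / 2, ?_, ?_, ?_⟩
    · have : (0:ℝ) < min 1 ρ' := lt_min one_pos hρ'pos
      positivity
    · have : min 1 ρ' ≤ 1 := min_le_left _ _
      linarith
    · have h1 : min 1 ρ' ≤ ρ' := min_le_right _ _
      have h2 : 0 < min 1 ρ' := lt_min one_pos hρ'pos
      nlinarith
  set m : ℝ := 2 - ρ with hmdef
  have hm1 : 1 ≤ m := by rw [hmdef]; linarith
  have hm2 : m ≤ 2 := by rw [hmdef]; linarith
  have hmpos : 0 < m := by linarith
  set τ : ℝ := ρ / m with hτdef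
  have hτpos : 0 < τ := by rw [hτdef]; positivity
  have hτle : τ ≤ 1/2 := by
    rw [hτdef, div_le_iff₀ hmpos]; nlinarith
  have hmτ : m * (1 + τ) = 2 := by
    rw [hτdef]; field_simp; rw [hmdef]; ring
  -- the reparametrisations
  set α : ℝ → ℝ := tf m τ with hαdef
  set β : ℝ → ℝ := fun t => 1 - tf m τ (1 - t) with hβdef
  set α' : ℝ → ℝ := tf' m τ with hα'def
  set β' : ℝ → ℝ := fun t => tf' m τ (1 - t) with hβ'def
  have hαder : ∀ t : ℝ, HasDerivAt α (α' t) t := tf_hasDerivAt m τ hτpos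
  have hβder : ∀ t : ℝ, HasDerivAt β (β' t) t := by
    intro t
    have h1 : HasDerivAt (fun t : ℝ => tf m τ (1 - t)) (-(tf' m τ (1 - t))) t := by
      have := (tf_hasDerivAt m τ hτpos (1 - t)).comp t
        ((hasDerivAt_const t (1:ℝ)).sub (hasDerivAt_id t))
      simpa [Function.comp_def] using this
    have := h1.const_sub 1
    simpa [hβdef, hβ'def] using this
  have hαcont : Continuous α := by
    rw [continuous_iff_continuousAt]; exact fun t => (hαder t).continuousAt
  have hβcont : Continuous β := by
    rw [continuous_iff_continuousAt]; exact fun t => (hβder t).continuousAt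
  have hαmem : ∀ t ∈ Icc (0:ℝ) 1, α t ∈ Icc (0:ℝ) 1 :=
    fun t ht => tf_mem m τ hτpos hτle hmpos.le hmτ ht
  have hβmem : ∀ t ∈ Icc (0:ℝ) 1, β t ∈ Icc (0:ℝ) 1 := by
    intro t ht
    have := tf_mem m τ hτpos hτle hmpos.le hmτ
      (show 1 - t ∈ Icc (0:ℝ) 1 from ⟨by linarith [ht.2], by linarith [ht.1]⟩)
    exact ⟨by rw [hβdef]; simp only []; linarith [this.2], by rw [hβdef]; simp only []; linarith [this.1]⟩
  -- the concatenated curve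
  set Γ : ℝ → Pt n lam := fun t => γ₁ (α t) + γ₂ (β t) - γ₂ 0 with hΓdef
  set Γ' : ℝ → Pt n lam := fun t => α' t • γ₁' (α t) + β' t • γ₂' (β t) with hΓ'def
  have hβzero : ∀ t : ℝ, t ≤ 1/2 - τ → (β t = 0 ∧ β' t = 0) := by
    intro t ht
    constructor
    · rw [hβdef]; simp only []
      rw [tf_eq_one m τ hτpos hmτ (by linarith)]; ring
    · rw [hβ'def]; simp only []
      exact tf'_eq_zero m τ hτpos (by linarith)
  have hαone : ∀ t : ℝ, 1/2 + τ ≤ t → (α t = 1 ∧ α' t = 0) := by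
    intro t ht
    exact ⟨tf_eq_one m τ hτpos hmτ (by linarith), tf'_eq_zero m τ hτpos (by linarith)⟩
  have hgood : ∀ t ∈ Icc (0:ℝ) 1, (Γ t, Γ' t) ∈ Good ζ ε n lam := by
    intro t ht
    rcases le_or_gt t (1/2 - τ) with hc1 | hc1'
    · -- first phase
      obtain ⟨hb, hb'⟩ := hβzero t hc1
      have hΓt : Γ t = γ₁ (α t) := by
        rw [hΓdef]; simp only []; rw [hb, hy2]
        abel
      have hΓ't : Γ' t = m • γ₁' (α t) := by
        have ha2 : α' t = m := tf'_eq_m m τ hτpos.le (by linarith)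
        show α' t • γ₁' (α t) + β' t • γ₂' (β t) = m • γ₁' (α t)
        rw [hb', ha2]
        simp
      rw [hΓt, hΓ't]
      exact good_smul hmpos (mem_good ⟨hder1, hcont1, hN1, hg1, hp1⟩ (hαmem t ht))
    · rcases le_or_gt (1/2 + τ) t with hc2 | hc2'
      · -- last phase
        obtain ⟨ha, ha'⟩ := hαone t hc2
        have hΓt : Γ t = γ₂ (β t) := by
          rw [hΓdef]; simp only []; rw [ha, hyy]
          abel
        have hΓ't : Γ' t = m • γ₂' (β t) := by
          have hb2 : β' t = m := tf'_eq_m m τ hτpos.le (by linarith)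
          show α' t • γ₁' (α t) + β' t • γ₂' (β t) = m • γ₂' (β t)
          rw [ha', hb2]
          simp
        rw [hΓt, hΓ't]
        exact good_smul hmpos (mem_good ⟨hder2, hcont2, hN2, hg2, hp2⟩ (hβmem t ht))
      · -- overlap phase
        have hcA : ((α' t, β' t) : ℝ × ℝ) ∈ A := by
          refine ⟨⟨⟨tf'_nonneg m τ hτpos hmpos.le t, le_trans (tf'_le m τ hτpos hmpos.le t) hm2⟩,
            ⟨tf'_nonneg m τ hτpos hmpos.le (1-t), le_trans (tf'_le m τ hτpos hmpos.le (1-t)) hm2⟩⟩, ?_⟩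
          show 1 ≤ α' t + β' t
          rcases le_or_gt t (1/2) with hh | hh
          · have ha2 : α' t = m := tf'_eq_m m τ hτpos.le hh
            have hb2 : 0 ≤ β' t := tf'_nonneg m τ hτpos hmpos.le (1-t)
            rw [ha2]; linarith
          · have hb2 : β' t = m := tf'_eq_m m τ hτpos.le (by linarith)
            have ha2 : 0 ≤ α' t := tf'_nonneg m τ hτpos hmpos.le t
            rw [hb2]; linarith
        have h1 : tf m τ (1/2 - τ) = m * (1/2 - τ) := tf_linear m τ hτpos.le (by linarith)
        have h3 : m * τ = ρ := by rw [hτdef]; field_simp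
        have hαlow : 1 - 3/2 * ρ ≤ α t := by
          have h2 : tf m τ (1/2 - τ) ≤ tf m τ t := tf_mono m τ hτpos hmpos.le (by linarith)
          show 1 - 3/2 * ρ ≤ tf m τ t
          nlinarith [h1, h2, h3]
        have hβhigh : β t ≤ 3/2 * ρ := by
          have h2 : tf m τ (1/2 - τ) ≤ tf m τ (1 - t) := tf_mono m τ hτpos hmpos.le (by linarith)
          show 1 - tf m τ (1 - t) ≤ 3/2 * ρ
          nlinarith [h1, h2, h3]
        have hsv : ((α t, β t) : ℝ × ℝ) ∈ v := by
          apply hρball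
          rw [Metric.mem_ball, Prod.dist_eq]
          have hd1 : dist (α t) 1 < ρ' := by
            rw [Real.dist_eq, abs_of_nonpos (by linarith [(hαmem t ht).2])]
            linarith only [hαlow, hρlt]
          have hd2 : dist (β t) 0 < ρ' := by
            rw [Real.dist_eq, sub_zero, abs_of_nonneg (hβmem t ht).1]
            exact lt_of_le_of_lt hβhigh hρlt
          exact max_lt hd1 hd2
        have hmem : (((α' t, β' t), (α t, β t)) : (ℝ × ℝ) × (ℝ × ℝ)) ∈ O ∩ SS :=
          ⟨huv ⟨hAu hcA, hsv⟩, trivial, hαmem t ht, hβmem t ht⟩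
        rw [← hOeq] at hmem
        exact hmem.1
  refine ⟨Γ, Γ', ⟨?_, ?_, ?_, ?_, ?_⟩, ?_, ?_⟩
  · intro t ht
    have h1 : HasDerivAt (γ₁ ∘ α) (α' t • γ₁' (α t)) t :=
      HasDerivAt.scomp (hg := hder1 (α t) (hαmem t ht)) (hh := hαder t)
    have h2 : HasDerivAt (γ₂ ∘ β) (β' t • γ₂' (β t)) t :=
      HasDerivAt.scomp (hg := hder2 (β t) (hβmem t ht)) (hh := hβder t)
    exact (h1.add h2).sub_const (γ₂ 0)
  · rw [hΓ'def]
    apply ContinuousOn.add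
    · exact ((continuous_tf' m τ).continuousOn).smul
        (hcont1.comp hαcont.continuousOn (fun t ht => hαmem t ht))
    · exact (((continuous_tf' m τ).comp (continuous_const.sub continuous_id)).continuousOn).smul
        (hcont2.comp hβcont.continuousOn (fun t ht => hβmem t ht))
  · exact fun t ht => (hgood t ht).1
  · exact fun t ht => (hgood t ht).2.1
  · exact fun t ht => (hgood t ht).2.2
  · -- Γ 0 = x
    rw [hΓdef]; simp only []
    have hα0 : α 0 = 0 := tf_zero m τ hτpos.le
    have hβ0 : β 0 = 0 := by
      rw [hβdef]; simp only []
      rw [tf_eq_one m τ hτpos hmτ (by linarith)]; ring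
    rw [hα0, hβ0, hx]
    abel
  · -- Γ 1 = z
    rw [hΓdef]; simp only []
    have hα1 : α 1 = 1 := tf_eq_one m τ hτpos hmτ (by linarith)
    have hβ1 : β 1 = 1 := by
      rw [hβdef]; simp only []
      rw [show (1:ℝ) - 1 = 0 by ring, tf_zero m τ hτpos.le]; ring
    rw [hα1, hβ1, hyy, hz]
    abel


end Aux18

/-- for any index `0 ≤ λ ≤ n` and any `q ∈ N`: if some
`y ∈ ↓I⁺(q)` has `y ∉ I⁻(q)`, then some `z ∈ ↓I⁺(q)` avoids the closure (in `N`)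
of `I⁻(q)`; dually for `↑I⁻(q)` and `I⁺(q)`. -/
theorem stmt18 (n lam : ℕ) (hn : 2 ≤ n) (hlam : lam ≤ n)
    (ζ ε : ℝ) (hζ : 1 < ζ) (hε : 0 < ε)
    (q : Pt n lam) (hq : q ∈ NN n lam ε) :
    ((∃ y ∈ downSet ζ ε (Iplus ζ ε q), y ∉ Iminus ζ ε q) →
      ∃ z ∈ downSet ζ ε (Iplus ζ ε q), z ∉ closure (Iminus ζ ε q)) ∧
    ((∃ y ∈ upSet ζ ε (Iminus ζ ε q), y ∉ Iplus ζ ε q) →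
      ∃ z ∈ upSet ζ ε (Iminus ζ ε q), z ∉ closure (Iplus ζ ε q)) := by
  constructor
  · rintro ⟨y, hyD, hyI⟩
    by_contra hcon
    push_neg at hcon
    have hDopen : IsOpen (downSet ζ ε (Iplus ζ ε q)) := isOpen_interior
    have hySet : y ∈ {p ∈ NN n lam ε | ∀ u ∈ Iplus ζ ε q, chron ζ ε p u} :=
      interior_subset hyD
    have hyN : y ∈ NN n lam ε := hySet.1
    obtain ⟨hfut, -⟩ := Aux18.ball_chron hζ hyN hDopen hyD
    obtain ⟨z, hzD, η, hη, hball⟩ := hfut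
    have hzcl := hcon z hzD
    rw [Metric.mem_closure_iff] at hzcl
    obtain ⟨w, hwI, hwd⟩ := hzcl η hη
    have hyw : chron ζ ε y w := hball w (by rw [dist_comm]; exact hwd)
    have hyq : chron ζ ε y q := Aux18.chron_trans hζ hyw hwI.2
    exact hyI ⟨hyN, hyq⟩
  · rintro ⟨y, hyU, hyI⟩
    by_contra hcon
    push_neg at hcon
    have hUopen : IsOpen (upSet ζ ε (Iminus ζ ε q)) := isOpen_interior
    have hySet : y ∈ {p ∈ NN n lam ε | ∀ u ∈ Iminus ζ ε q, chron ζ ε u p} :=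
      interior_subset hyU
    have hyN : y ∈ NN n lam ε := hySet.1
    obtain ⟨-, hpast⟩ := Aux18.ball_chron hζ hyN hUopen hyU
    obtain ⟨z, hzU, η, hη, hball⟩ := hpast
    have hzcl := hcon z hzU
    rw [Metric.mem_closure_iff] at hzcl
    obtain ⟨w, hwI, hwd⟩ := hzcl η hη
    have hwy : chron ζ ε w y := hball w (by rw [dist_comm]; exact hwd)
    have hqy : chron ζ ε q y := Aux18.chron_trans hζ hwI.2 hwy
    exact hyI ⟨hyN, hqy⟩
end
end
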